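/- Let n ≥ 1, let s be an n-bit string, let A be a set of n-bit strings with |A| = 2^q, let e : A → ZMod 2 be noise bits, and let ψ be the associated noisy quantum sample state. Then for every nonzero n-bit string φ, the probability of the algorithm outputting the false candidate s + φ satisfies P_F = |(W_{n+1} ψ)(s + φ, 1)|² = 2^{−(n+q+1)} · | ∑_{a ∈ A} χ( a·φ + e(a) ) |². -/

import Mathlib

open scoped BigOperators

/-- `χ(x) = (-1)^x` for a bit `x ∈ ZMod 2`. -/
noncomputable def chi (x : ZMod 2) : ℂ := (-1 : ℂ) ^ x.val

/-- The `(n+1)`-bit Walsh–Hadamard transform, where an `(n+1)`-bit string is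
identified with a pair of an `n`-bit string and a bit, and the dot product of
`(a, b)` and `(𝐤, k⋆)` is `a·𝐤 + b·k⋆`. -/
noncomputable def WH (n : ℕ) (f : ((Fin n → ZMod 2) × ZMod 2) → ℂ)
    (k : (Fin n → ZMod 2) × ZMod 2) : ℂ :=
  ((Real.sqrt (2 ^ (n + 1)) : ℝ) : ℂ)⁻¹ *
    ∑ j : (Fin n → ZMod 2) × ZMod 2,
      chi ((∑ i, j.1 i * k.1 i) + j.2 * k.2) * f j


/-- The probability of the quantum NBLP algorithm outputting a false candidate
`s + φ` (`φ ≠ 0`):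
`P_F = |(W ψ)(s + φ, 1)|² = 2^{-(n+q+1)} |∑_{a ∈ A} χ(a·φ + e(a))|²`. -/
theorem false_candidate_probability (n q : ℕ) (hn : 1 ≤ n) (hq : q ≤ n)
    (s : Fin n → ZMod 2) (A : Finset (Fin n → ZMod 2)) (hA : A.card = 2 ^ q)
    (e : (Fin n → ZMod 2) → ZMod 2)
    (ψ : ((Fin n → ZMod 2) × ZMod 2) → ℂ)
    (hψ : ∀ a b, ψ (a, b) =
      if a ∈ A ∧ b = (∑ i, a i * s i) + e a then
        ((Real.sqrt (2 ^ q) : ℝ) : ℂ)⁻¹ else 0)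
    (φ : Fin n → ZMod 2) (hφ : φ ≠ 0) :
    ‖WH n ψ (s + φ, 1)‖ ^ 2 =
      ((2 : ℝ) ^ (n + q + 1))⁻¹ *
        ‖∑ a ∈ A, chi ((∑ i, a i * φ i) + e a)‖ ^ 2 := by
  have hzmod : ∀ x y z : ZMod 2, (x + y) + (x + z) * 1 = y + z := by decide
  have h1 : ∀ a : Fin n → ZMod 2,
      (∑ b : ZMod 2, chi ((∑ i, a i * (s + φ) i) + b * 1) * ψ (a, b))
      = (if a ∈ A then chi ((∑ i, a i * φ i) + e a) *
          ((Real.sqrt (2 ^ q) : ℝ) : ℂ)⁻¹ else 0) := by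
    intro a
    simp only [hψ]
    by_cases ha : a ∈ A
    · simp only [ha, true_and, if_pos]
      rw [Finset.sum_eq_single ((∑ i, a i * s i) + e a)]
      · rw [if_pos rfl]
        congr 2
        have h2 : (∑ i, a i * (s + φ) i) = (∑ i, a i * s i) + (∑ i, a i * φ i) := by
          rw [← Finset.sum_add_distrib]
          exact Finset.sum_congr rfl fun i _ => by simp [Pi.add_apply, mul_add]
        rw [h2]
        exact hzmod _ _ _
      · intro b _ hb
        rw [if_neg hb, mul_zero]
      · intro h; exact absurd (Finset.mem_univ _) h
    · simp [ha]
  have key : WH n ψ (s + φ, 1)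
      = ((Real.sqrt (2 ^ (n + 1)) : ℝ) : ℂ)⁻¹ * (((Real.sqrt (2 ^ q) : ℝ) : ℂ)⁻¹ *
        ∑ a ∈ A, chi ((∑ i, a i * φ i) + e a)) := by
    unfold WH
    congr 1
    rw [Fintype.sum_prod_type]
    simp only [h1]
    rw [Finset.sum_ite_mem, Finset.univ_inter, Finset.mul_sum]
    exact Finset.sum_congr rfl fun a _ => mul_comm _ _
  rw [key]
  rw [norm_mul, norm_mul, norm_inv, norm_inv, Complex.norm_real, Complex.norm_real, Real.norm_eq_abs, Real.norm_eq_abs]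
  have s1 : |Real.sqrt (2 ^ (n + 1))| = Real.sqrt (2 ^ (n + 1)) :=
    abs_of_nonneg (Real.sqrt_nonneg _)
  have s2 : |Real.sqrt (2 ^ q)| = Real.sqrt (2 ^ q) :=
    abs_of_nonneg (Real.sqrt_nonneg _)
  rw [s1, s2]
  have q1 : Real.sqrt (2 ^ (n + 1)) ^ 2 = 2 ^ (n + 1) :=
    Real.sq_sqrt (by positivity)
  have q2 : Real.sqrt (2 ^ q) ^ 2 = 2 ^ q := Real.sq_sqrt (by positivity)
  rw [mul_pow, mul_pow, inv_pow, inv_pow, q1, q2]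
  rw [show n + q + 1 = (n + 1) + q by ring, pow_add]
  ring
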